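/- Let a, b be points of the open unit disk lying on a common diameter through 0 (i.e., 0, a, b collinear), a ≠ b. Then the visual angle v(a,b) := sup over z on the unit circle of the angle ∠(a,z,b) satisfies tan v(a,b) = sinh(ρ(a,b)/2), where ρ is the hyperbolic metric of the unit disk defined by sinh(ρ(a,b)/2) = |a−b|/√((1−|a|²)(1−|b|²)). -/

import Mathlib

open Complex Real
open scoped RealInnerProductSpace

lemma angle_eq_arctan (x y : ℂ) (h : 0 < ((starRingEnd ℂ) x * y).re) :
    InnerProductGeometry.angle x y =
      Real.arctan (|((starRingEnd ℂ) x * y).im| / ((starRingEnd ℂ) x * y).re) := by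
  set w := (starRingEnd ℂ) x * y with hw
  have hx : x ≠ 0 := by rintro rfl; simp [hw] at h
  have hy : y ≠ 0 := by rintro rfl; simp [hw] at h
  have hN : 0 < ‖x‖ * ‖y‖ :=
    mul_pos (norm_pos_iff.2 hx) (norm_pos_iff.2 hy)
  have hcos : Real.cos (InnerProductGeometry.angle x y) = w.re / (‖x‖ * ‖y‖) := by
    rw [InnerProductGeometry.cos_angle, Complex.inner, mul_comm y]
  have hsq : ⟪x, x⟫ * ⟪y, y⟫ - ⟪x, y⟫ * ⟪x, y⟫ = w.im ^ 2 := by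
    rw [Complex.inner, Complex.inner, Complex.inner]
    have h1 : ((starRingEnd ℂ) x * x).re = Complex.normSq x := by
      simp [Complex.normSq_apply, Complex.mul_re]
    have h2 : ((starRingEnd ℂ) y * y).re = Complex.normSq y := by
      simp [Complex.normSq_apply, Complex.mul_re]
    have h3 : Complex.normSq x * Complex.normSq y = w.re ^ 2 + w.im ^ 2 := by
      rw [hw]
      have := Complex.normSq_mul ((starRingEnd ℂ) x) y
      rw [Complex.normSq_conj] at this
      rw [← this, Complex.normSq_apply]; ring
    rw [mul_comm x, mul_comm y ((starRingEnd ℂ) y), mul_comm y ((starRingEnd ℂ) x), h1, h2, h3]; ring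
  have hsin : Real.sin (InnerProductGeometry.angle x y) = |w.im| / (‖x‖ * ‖y‖) := by
    have h4 := InnerProductGeometry.sin_angle_mul_norm_mul_norm x y
    rw [hsq, Real.sqrt_sq_eq_abs] at h4
    rw [eq_div_iff hN.ne']
    exact h4
  have hcospos : 0 < Real.cos (InnerProductGeometry.angle x y) := by
    rw [hcos]; exact div_pos h hN
  have hlt : InnerProductGeometry.angle x y < π / 2 := by
    by_contra hle
    push_neg at hle
    have := Real.cos_nonpos_of_pi_div_two_le_of_le hle
      (by linarith [InnerProductGeometry.angle_le_pi x y, Real.pi_pos])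
    linarith
  have hgt : -(π / 2) < InnerProductGeometry.angle x y := by
    have := InnerProductGeometry.angle_nonneg x y
    linarith [Real.pi_pos]
  rw [← Real.arctan_tan hgt hlt, Real.tan_eq_sin_div_cos, hsin, hcos]
  congr 1
  rw [div_div_div_eq, mul_comm (|w.im|) (‖x‖ * ‖y‖), mul_div_mul_left _ _ hN.ne']


lemma re_pos_aux (α β x y : ℝ) (hα : |α| < 1) (hβ : |β| < 1) (hxy : x ^ 2 + y ^ 2 = 1) :
    0 < 1 + α * β - (α + β) * x := by
  have hx1 : x ≤ 1 := by nlinarith [sq_nonneg y]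
  have hx2 : -1 ≤ x := by nlinarith [sq_nonneg y]
  have h1 : -1 < α := neg_lt_of_abs_lt hα
  have h2 : α < 1 := lt_of_abs_lt hα
  have h3 : -1 < β := neg_lt_of_abs_lt hβ
  have h4 : β < 1 := lt_of_abs_lt hβ
  rcases le_or_gt 0 (α + β) with hs | hs
  · nlinarith
  · nlinarith

lemma angle_formula (α β : ℝ) (u z : ℂ) (hu : ‖u‖ = 1) (hz : ‖z‖ = 1)
    (hα : |α| < 1) (hβ : |β| < 1) :
    EuclideanGeometry.angle ((α : ℂ) * u) z ((β : ℂ) * u) =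
      Real.arctan ((|β - α| * |((starRingEnd ℂ) u * z).im|) /
        (1 + α * β - (α + β) * ((starRingEnd ℂ) u * z).re)) := by
  have hu' : u.re ^ 2 + u.im ^ 2 = 1 := by
    have := Complex.sq_norm u
    rw [hu] at this
    simpa [Complex.normSq_apply, sq] using this.symm
  have hz' : z.re ^ 2 + z.im ^ 2 = 1 := by
    have := Complex.sq_norm z
    rw [hz] at this
    simpa [Complex.normSq_apply, sq] using this.symm
  set ζ := (starRingEnd ℂ) u * z with hζ
  have hζabs : ζ.re ^ 2 + ζ.im ^ 2 = 1 := by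
    simp only [hζ, Complex.mul_re, Complex.mul_im, Complex.conj_re, Complex.conj_im]
    nlinarith
  set w := (starRingEnd ℂ) ((α : ℂ) * u - z) * ((β : ℂ) * u - z) with hw
  have hre : w.re = 1 + α * β - (α + β) * ζ.re := by
    simp only [hw, hζ, Complex.mul_re, Complex.mul_im, Complex.sub_re, Complex.sub_im,
      Complex.conj_re, Complex.conj_im, Complex.ofReal_re, Complex.ofReal_im, map_sub, map_mul,
      Complex.conj_ofReal]
    linear_combination α * β * hu' + hz'
  have him : w.im = (β - α) * ζ.im := by
    simp only [hw, hζ, Complex.mul_re, Complex.mul_im, Complex.sub_re, Complex.sub_im,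
      Complex.conj_re, Complex.conj_im, Complex.ofReal_re, Complex.ofReal_im, map_sub, map_mul,
      Complex.conj_ofReal]
    ring
  have hrepos : 0 < w.re := by
    rw [hre]; exact re_pos_aux α β ζ.re ζ.im hα hβ hζabs
  rw [EuclideanGeometry.angle, vsub_eq_sub, vsub_eq_sub, angle_eq_arctan _ _ hrepos]
  rw [← hw, hre, him, abs_mul]



open Complex EuclideanGeometry

/-- The visual angle metric of the unit disk. -/
noncomputable def vam (a b : ℂ) : ℝ :=
  sSup {θ : ℝ | ∃ z : ℂ, ‖z‖ = 1 ∧ θ = EuclideanGeometry.angle a z b}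

set_option maxHeartbeats 1000000

theorem vam_radial (a b : ℂ) (ha : ‖a‖ < 1) (hb : ‖b‖ < 1)
    (hab : a ≠ b) (hcol : Collinear ℝ ({0, a, b} : Set ℂ)) :
    Real.tan (vam a b) =
      ‖a - b‖ / Real.sqrt ((1 - ‖a‖ ^ 2) * (1 - ‖b‖ ^ 2)) := by
  -- extract a radial parametrization
  have h0 : (0 : ℂ) ∈ ({0, a, b} : Set ℂ) := by simp
  rw [collinear_iff_of_mem h0] at hcol
  obtain ⟨v, hv⟩ := hcol
  obtain ⟨r₁, ha1⟩ := hv a (by simp)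
  obtain ⟨r₂, hb1⟩ := hv b (by simp)
  have hvne : v ≠ 0 := by
    rintro rfl
    apply hab
    rw [ha1, hb1]; simp
  have hcpos : 0 < ‖v‖ := by
    simpa using hvne
  set u : ℂ := (↑‖v‖)⁻¹ * v with hu_def
  have hu : ‖u‖ = 1 := by
    rw [hu_def, norm_mul, norm_inv, Complex.norm_real, Real.norm_eq_abs, abs_of_pos hcpos]
    field_simp
  set α : ℝ := r₁ * ‖v‖ with hα_def
  set β : ℝ := r₂ * ‖v‖ with hβ_def
  have ha_eq : a = (α : ℂ) * u := by
    rw [ha1, hu_def, hα_def]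
    push_cast
    have : (‖v‖ : ℂ) ≠ 0 := by exact_mod_cast hcpos.ne'
    field_simp [Complex.real_smul, vadd_eq_add]
    change r₁ • v + 0 = _; rw [add_zero, Complex.real_smul, mul_comm]
  have hb_eq : b = (β : ℂ) * u := by
    rw [hb1, hu_def, hβ_def]
    push_cast
    have : (‖v‖ : ℂ) ≠ 0 := by exact_mod_cast hcpos.ne'
    field_simp [Complex.real_smul, vadd_eq_add]
    change r₂ • v + 0 = _; rw [add_zero, Complex.real_smul, mul_comm]
  have habs_a : ‖a‖ = |α| := by rw [ha_eq, norm_mul, Complex.norm_real, Real.norm_eq_abs, hu, mul_one]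
  have habs_b : ‖b‖ = |β| := by rw [hb_eq, norm_mul, Complex.norm_real, Real.norm_eq_abs, hu, mul_one]
  have hα : |α| < 1 := habs_a ▸ ha
  have hβ : |β| < 1 := habs_b ▸ hb
  have hαβ : α ≠ β := by
    intro h
    exact hab (by rw [ha_eq, hb_eq, h])
  have hune : u ≠ 0 := by
    intro h
    rw [h] at hu; simp at hu
  clear_value u α β
  -- the key quantities
  have hα2 : α ^ 2 < 1 := by nlinarith [abs_nonneg α, _root_.sq_abs α]
  have hβ2 : β ^ 2 < 1 := by nlinarith [abs_nonneg β, _root_.sq_abs β]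
  set q : ℝ := Real.sqrt ((1 - α ^ 2) * (1 - β ^ 2)) with hq_def
  have hqq : 0 < (1 - α ^ 2) * (1 - β ^ 2) := by nlinarith
  have hqpos : 0 < q := Real.sqrt_pos.2 hqq
  have hq2 : q ^ 2 = (1 - α ^ 2) * (1 - β ^ 2) := Real.sq_sqrt hqq.le
  have hppos : 0 < 1 + α * β := by nlinarith
  have hs2 : (α + β) ^ 2 + q ^ 2 = (1 + α * β) ^ 2 := by rw [hq2]; ring
  clear_value q
  set M : ℝ := |α - β| / q with hM_def
  clear_value M
  -- upper bound for the angles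
  have hub : ∀ θ ∈ {θ : ℝ | ∃ z : ℂ, ‖z‖ = 1 ∧ θ = EuclideanGeometry.angle a z b},
      θ ≤ Real.arctan M := by
    rintro θ ⟨z, hz, rfl⟩
    rw [ha_eq, hb_eq, angle_formula α β u z hu hz hα hβ]
    apply Real.arctan_strictMono.monotone
    set x : ℝ := ((starRingEnd ℂ) u * z).re with hx_def
    set y : ℝ := ((starRingEnd ℂ) u * z).im with hy_def
    have hxy : x ^ 2 + y ^ 2 = 1 := by
      have habs1 : ‖(starRingEnd ℂ) u * z‖ = 1 := by
        rw [norm_mul, Complex.norm_conj, hu, hz, mul_one]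
      have h2 := Complex.sq_norm ((starRingEnd ℂ) u * z)
      rw [habs1, one_pow, Complex.normSq_apply] at h2
      rw [hx_def, hy_def, sq, sq]
      exact h2.symm
    have hd : 0 < 1 + α * β - (α + β) * x := re_pos_aux α β x y hα hβ hxy
    rw [hM_def, div_le_div_iff₀ hd hqpos]
    have key : (α + β) * x + |y| * q ≤ 1 + α * β := by
      nlinarith [sq_nonneg ((α + β) * |y| - q * x), _root_.sq_abs y, abs_nonneg y, hppos]
    have h5 : |y| * q ≤ 1 + α * β - (α + β) * x := by linarith
    calc |β - α| * |y| * q = |α - β| * (|y| * q) := by rw [abs_sub_comm]; ring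
      _ ≤ |α - β| * (1 + α * β - (α + β) * x) := by
          exact mul_le_mul_of_nonneg_left h5 (abs_nonneg _)
  -- the maximizing point
  have hmem : Real.arctan M ∈
      {θ : ℝ | ∃ z : ℂ, ‖z‖ = 1 ∧ θ = EuclideanGeometry.angle a z b} := by
    set x₀ : ℝ := (α + β) / (1 + α * β) with hx₀
    set y₀ : ℝ := q / (1 + α * β) with hy₀
    have hy₀pos : 0 < y₀ := div_pos hqpos hppos
    clear_value x₀ y₀
    set ζ : ℂ := (x₀ : ℂ) + (y₀ : ℂ) * Complex.I with hζ_def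
    have hζre : ζ.re = x₀ := by simp [hζ_def]
    have hζim : ζ.im = y₀ := by simp [hζ_def]
    clear_value ζ
    have hζnsq : Complex.normSq ζ = 1 := by
      rw [Complex.normSq_apply, hζre, hζim, hx₀, hy₀]
      field_simp
      linarith [hs2]
    have hζabs : ‖ζ‖ = 1 := by
      have h2 := Complex.sq_norm ζ
      rw [hζnsq] at h2
      nlinarith [norm_nonneg ζ]
    refine ⟨u * ζ, ?_, ?_⟩
    · rw [norm_mul, hu, hζabs, mul_one]
    · rw [ha_eq, hb_eq, angle_formula α β u (u * ζ) hu (by rw [norm_mul, hu, hζabs, mul_one]) hα hβ]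
      have hcu : (starRingEnd ℂ) u * (u * ζ) = ζ := by
        rw [← mul_assoc, mul_comm ((starRingEnd ℂ) u) u, Complex.mul_conj]
        have : Complex.normSq u = 1 := by
          have := Complex.sq_norm u
          rw [hu] at this; simpa using this.symm
        rw [this]
        simp
      rw [hcu, hζre, hζim]
      congr 1
      have hden : 1 + α * β - (α + β) * x₀ = q ^ 2 / (1 + α * β) := by
        rw [hx₀]
        field_simp
        linarith [hs2]
      rw [abs_of_pos hy₀pos, hden, hy₀, hM_def, abs_sub_comm α β]
      have hqne : q ≠ 0 := hqpos.ne'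
      have hpne : (1 : ℝ) + α * β ≠ 0 := hppos.ne'
      field_simp
      ring_nf
      rw [mul_comm β α, ← add_one_mul, add_comm, mul_inv_cancel₀ hpne]
  -- conclude
  have hsup : vam a b = Real.arctan M := by
    rw [vam]
    exact IsGreatest.csSup_eq ⟨hmem, hub⟩
  have h1 : ‖a - b‖ = |α - β| := by
    rw [ha_eq, hb_eq, ← sub_mul, ← Complex.ofReal_sub, norm_mul, Complex.norm_real, Real.norm_eq_abs, hu, mul_one]
  have h2 : Real.sqrt ((1 - ‖a‖ ^ 2) * (1 - ‖b‖ ^ 2)) = q := by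
    rw [habs_a, habs_b, _root_.sq_abs, _root_.sq_abs]
    exact hq_def.symm
  rw [hsup, Real.tan_arctan, hM_def, h1, h2]
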